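/- arXiv:cs/9811012 — 2 statements merged into one kernel-verified Lean document; each statement's English description precedes it below -/
import Mathlib

section
/- Let A and B be terms and ρ₁, ρ₂ renamings such that dom(ρ₁) = dom(ρ₂) ⊇ vars(B), rang(ρ₁) ∩ vars(A) = ∅ and rang(ρ₂) ∩ vars(A) = ∅. Then A and Bρ₁ unify if and only if A and Bρ₂ unify. -/
open scoped Classical

/-- First-order terms over a set `F` of function symbols, with variables drawn from `ℕ`. -/
inductive Tm (F : Type) : Type
  | var : ℕ → Tm F
  | app : F → List (Tm F) → Tm F

namespace Tm

/-- Applying a substitution (a map from variables to terms) to a term. -/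
def subst {F : Type} : Tm F → (ℕ → Tm F) → Tm F
  | var x, θ => θ x
  | app f ts, θ => app f (ts.attach.map fun t => t.1.subst θ)
  decreasing_by
    have := List.sizeOf_lt_of_mem t.2
    simp only [Tm.app.sizeOf_spec]
    omega

/-- The set of variables occurring in a term. -/
def vars {F : Type} : Tm F → Set ℕ
  | var x => {x}
  | app _ ts => ⋃ t : {x // x ∈ ts}, t.1.vars
  decreasing_by
    have := List.sizeOf_lt_of_mem t.2
    simp only [Tm.app.sizeOf_spec]
    omega

/-- A term is ground if it contains no variables. -/
def Ground {F : Type} (t : Tm F) : Prop := t.vars = ∅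

end Tm

/-- Substitutions are maps from variables to terms (finite support is
    imposed separately by `Subst.IsSubst`). -/
abbrev Subst (F : Type) := ℕ → Tm F

namespace Subst

variable {F : Type}

/-- The domain of a substitution. -/
def dom (θ : Subst F) : Set ℕ := {x | θ x ≠ Tm.var x}

/-- A genuine substitution is the identity on all but finitely many variables. -/
def IsSubst (θ : Subst F) : Prop := (dom θ).Finite

/-- The range variables of a substitution. -/
def rang (θ : Subst F) : Set ℕ := ⋃ x ∈ dom θ, (θ x).vars

/-- vars(θ) = dom(θ) ∪ rang(θ). -/
def svars (θ : Subst F) : Set ℕ := dom θ ∪ rang θ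

/-- Composition: `X (comp θ σ) = (X θ) σ`. -/
def comp (θ σ : Subst F) : Subst F := fun x => (θ x).subst σ

/-- Restriction of a substitution to a set of variables. -/
noncomputable def restrict (θ : Subst F) (V : Set ℕ) : Subst F :=
  fun x => if x ∈ V then θ x else Tm.var x

/-- A renaming is a substitution mapping its domain injectively to variables. -/
def IsRenaming (ρ : Subst F) : Prop :=
  IsSubst ρ ∧ (∀ x, ∃ y, ρ x = Tm.var y) ∧ Set.InjOn ρ (dom ρ)

/-- Two substitutions are equivalent modulo renaming. -/
def EquivMod (σ θ : Subst F) : Prop :=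
  ∃ δ ρ, IsRenaming δ ∧ IsRenaming ρ ∧ σ = comp θ δ ∧ θ = comp σ ρ

/-- `μ` is a unifier of the terms `s` and `t`. -/
def Unifier (μ : Subst F) (s t : Tm F) : Prop :=
  IsSubst μ ∧ s.subst μ = t.subst μ

/-- Two terms unify if they have a unifier. -/
def Unify (s t : Tm F) : Prop := ∃ μ, Unifier μ s t

/-- `μ` is a most general unifier of the terms `s` and `t`. -/
def IsMGU (μ : Subst F) (s t : Tm F) : Prop :=
  Unifier μ s t ∧ ∀ τ, Unifier τ s t → ∃ δ, IsSubst δ ∧ τ = comp μ δ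

/-- The image of a set of variables under a renaming: `Vρ = {Xρ | X ∈ V}`. -/
def varImage (ρ : Subst F) (V : Set ℕ) : Set ℕ := {y | ∃ x ∈ V, ρ x = Tm.var y}

/-- The substitution `φρ`, whose bindings are `{Xρ ↦ tρ | X ↦ t a binding of φ}`. -/
noncomputable def renameSubst (φ ρ : Subst F) : Subst F := fun y =>
  if h : ∃ x, x ∈ dom φ ∧ ρ x = Tm.var y then (φ h.choose).subst ρ else Tm.var y

/-- `μ` is a unifier of a set of equations (pairs of terms). -/
def EqUnifier (μ : Subst F) (E : Set (Tm F × Tm F)) : Prop :=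
  IsSubst μ ∧ ∀ e ∈ E, e.1.subst μ = e.2.subst μ

/-- `μ` is a most general unifier of a set of equations. -/
def EqIsMGU (μ : Subst F) (E : Set (Tm F × Tm F)) : Prop :=
  EqUnifier μ E ∧ ∀ τ, EqUnifier τ E → ∃ δ, IsSubst δ ∧ τ = comp μ δ

/-- Applying a substitution to a set of equations. -/
def eqSubst (E : Set (Tm F × Tm F)) (θ : Subst F) : Set (Tm F × Tm F) :=
  (fun e => (e.1.subst θ, e.2.subst θ)) '' E

/-- `downwards(E, S) = S ∪ ⋃ {vars(t) | (X = t) ∈ E with X ∈ S}`. -/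
def downwards (E : Set (Tm F × Tm F)) (S : Set ℕ) : Set ℕ :=
  S ∪ {y | ∃ x t, (Tm.var x, t) ∈ E ∧ x ∈ S ∧ y ∈ Tm.vars t}

/-- `upwards(E, S) = S ∪ {X | (X = t) ∈ E and vars(t) ⊆ S}`. -/
def upwards (E : Set (Tm F × Tm F)) (S : Set ℕ) : Set ℕ :=
  S ∪ {x | ∃ t, (Tm.var x, t) ∈ E ∧ Tm.vars t ⊆ S}

end Subst


namespace Tm

theorem subst_app {F : Type} (f : F) (ts : List (Tm F)) (θ : ℕ → Tm F) :
    (Tm.app f ts).subst θ = Tm.app f (ts.map (fun t => t.subst θ)) := by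
  simp only [Tm.subst]
  rw [List.attach_map_val (l := ts) (f := fun t => Tm.subst t θ)]

theorem subst_congr {F : Type} : ∀ (t : Tm F) (θ σ : ℕ → Tm F),
    (∀ x ∈ t.vars, θ x = σ x) → t.subst θ = t.subst σ
  | var x, θ, σ, h => by
      simp only [Tm.subst]
      exact h x (by simp [Tm.vars])
  | app f ts, θ, σ, h => by
      simp only [subst_app]
      congr 1
      apply List.map_congr_left
      intro t ht
      exact subst_congr t θ σ (fun x hx => h x (by
        simp only [Tm.vars]
        exact Set.mem_iUnion.2 ⟨⟨t, ht⟩, hx⟩))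
  decreasing_by
    have := List.sizeOf_lt_of_mem ht
    simp only [Tm.app.sizeOf_spec]
    omega

theorem subst_subst' {F : Type} : ∀ (t : Tm F) (θ σ : ℕ → Tm F),
    (t.subst θ).subst σ = t.subst (fun x => (θ x).subst σ)
  | var x, θ, σ => by simp [Tm.subst]
  | app f ts, θ, σ => by
      simp only [subst_app, List.map_map]
      congr 1
      apply List.map_congr_left
      intro t ht
      exact subst_subst' t θ σ
  decreasing_by
    have := List.sizeOf_lt_of_mem ht
    simp only [Tm.app.sizeOf_spec]
    omega

end Tm

theorem unify_dir {F : Type} (A B : Tm F) (ρ₁ ρ₂ : Subst F)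
    (h₁ : Subst.IsRenaming ρ₁) (h₂ : Subst.IsRenaming ρ₂)
    (hdom : Subst.dom ρ₁ = Subst.dom ρ₂)
    (hB : B.vars ⊆ Subst.dom ρ₁)
    (hr₂ : Subst.rang ρ₂ ∩ A.vars = ∅) :
    Subst.Unify A (B.subst ρ₁) → Subst.Unify A (B.subst ρ₂) := by
  rintro ⟨μ, hμfin, hμeq⟩
  classical
  set ν : Subst F := fun y =>
    if h : ∃ x, x ∈ Subst.dom ρ₂ ∧ ρ₂ x = Tm.var y then (ρ₁ h.choose).subst μ
    else μ y with hνdef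
  have hrangfin : (Subst.rang ρ₂).Finite := by
    apply Set.Finite.biUnion h₂.1
    intro x _
    obtain ⟨y, hy⟩ := h₂.2.1 x
    rw [hy]
    simp [Tm.vars]
  have hmemrang : ∀ x y, x ∈ Subst.dom ρ₂ → ρ₂ x = Tm.var y → y ∈ Subst.rang ρ₂ := by
    intro x y hx hxy
    exact Set.mem_biUnion hx (by rw [hxy]; simp [Tm.vars])
  refine ⟨ν, ?_, ?_⟩
  · apply Set.Finite.subset (hμfin.union hrangfin)
    intro y hy
    by_cases h : ∃ x, x ∈ Subst.dom ρ₂ ∧ ρ₂ x = Tm.var y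
    · obtain ⟨x, hx, hxy⟩ := h
      exact Or.inr (hmemrang x y hx hxy)
    · left
      have hveq : ν y = μ y := by rw [hνdef]; exact dif_neg h
      exact (show μ y ≠ Tm.var y from hveq ▸ hy)
  · have hA : A.subst ν = A.subst μ := by
      apply Tm.subst_congr
      intro y hyA
      have hnot : ¬ ∃ x, x ∈ Subst.dom ρ₂ ∧ ρ₂ x = Tm.var y := by
        rintro ⟨x, hx, hxy⟩
        exact Set.eq_empty_iff_forall_notMem.mp hr₂ y ⟨hmemrang x y hx hxy, hyA⟩
      simp only [hνdef, dif_neg hnot]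
    have hB2 : (B.subst ρ₂).subst ν = (B.subst ρ₁).subst μ := by
      rw [Tm.subst_subst', Tm.subst_subst']
      apply Tm.subst_congr
      intro x hxB
      have hx₂ : x ∈ Subst.dom ρ₂ := hdom ▸ hB hxB
      obtain ⟨y, hy⟩ := h₂.2.1 x
      have hex : ∃ x', x' ∈ Subst.dom ρ₂ ∧ ρ₂ x' = Tm.var y := ⟨x, hx₂, hy⟩
      have hch := hex.choose_spec
      have hcx : hex.choose = x := h₂.2.2 hch.1 hx₂ (hch.2.trans hy.symm)
      rw [hy]
      show (Tm.var y).subst ν = (ρ₁ x).subst μ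
      simp only [Tm.subst, hνdef, dif_pos hex, hcx]
    rw [hA, hB2]
    exact hμeq

/-- with `dom(ρ₁) = dom(ρ₂) ⊇ vars(B)` and ranges of `ρ₁`, `ρ₂`
disjoint from `vars(A)`, `A` and `Bρ₁` unify iff `A` and `Bρ₂` unify. -/
theorem stmt2 {F : Type} (A B : Tm F) (ρ₁ ρ₂ : Subst F)
    (h₁ : Subst.IsRenaming ρ₁) (h₂ : Subst.IsRenaming ρ₂)
    (hdom : Subst.dom ρ₁ = Subst.dom ρ₂)
    (hB : B.vars ⊆ Subst.dom ρ₁)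
    (hr₁ : Subst.rang ρ₁ ∩ A.vars = ∅)
    (hr₂ : Subst.rang ρ₂ ∩ A.vars = ∅) :
    Subst.Unify A (B.subst ρ₁) ↔ Subst.Unify A (B.subst ρ₂) :=
  ⟨unify_dir A B ρ₁ ρ₂ h₁ h₂ hdom hB hr₂,
   unify_dir A B ρ₂ ρ₁ h₂ h₁ hdom.symm (hdom ▸ hB) hr₁⟩
end

section
/- Safety of the abstract unification algorithm for groundness analysis: let U and V be finite sets of variables, A a term with vars(A) ⊆ U, B a term with vars(B) ⊆ V, θ♭ ⊆ U and σ♭ ⊆ V. Let Ψ be a renaming with dom(Ψ) = U and UΨ ∩ V = ∅ (where UΨ = {XΨ | X ∈ U}), and suppose AΨ and B unify with an idempotent mgu whose associated solved-form set of equations is E₀ = {X = XE₀ | X ∈ dom(E₀)} (no variable of dom(E₀) occurs in any right-hand side of E₀). Let θ and ω be substitutions such that Xθ is ground for every X ∈ θ♭ and Xω is ground for every X ∈ σ♭. Let ρ be a renaming with vars(Aθρ) ∩ vars(Bω) = ∅, and suppose Aθρ and Bω unify with mgu μ. Then for every variable Z ∈ V ∩ upwards(E₀, downwards(E₀, θ♭Ψ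 ∪ σ♭)) (where θ♭Ψ = {XΨ | X ∈ θ♭}), the term Z(ω∘μ) is ground. -/
open scoped Classical

-- auxiliary lemmas

theorem Tm.strongInd {F : Type} {P : Tm F → Prop} (hv : ∀ x, P (Tm.var x))
    (ha : ∀ f ts, (∀ t ∈ ts, P t) → P (Tm.app f ts)) : ∀ t, P t
  | Tm.var x => hv x
  | Tm.app f ts => ha f ts (fun t ht => Tm.strongInd hv ha t)
  termination_by t => sizeOf t
  decreasing_by
    have := List.sizeOf_lt_of_mem ht
    simp only [Tm.app.sizeOf_spec]
    omega

theorem Tm.subst_var {F : Type} (x : ℕ) (θ : Subst F) :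
    (Tm.var x).subst θ = θ x := by rw [Tm.subst]

theorem Tm.subst_app_s11 {F : Type} (f : F) (ts : List (Tm F)) (θ : Subst F) :
    (Tm.app f ts).subst θ = Tm.app f (ts.map (fun t => t.subst θ)) := by
  rw [Tm.subst]
  congr 1
  simp [List.attach_map_val]

theorem Tm.mem_vars_var {F : Type} {x y : ℕ} :
    y ∈ (Tm.var x : Tm F).vars ↔ y = x := by rw [Tm.vars]; simp

theorem Tm.mem_vars_app {F : Type} {y : ℕ} {f : F} {ts : List (Tm F)} :
    y ∈ (Tm.app f ts).vars ↔ ∃ t ∈ ts, y ∈ t.vars := by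
  rw [Tm.vars]
  simp [Set.mem_iUnion]

theorem Tm.subst_congr_s11 {F : Type} (θ σ : Subst F) (t : Tm F)
    (h : ∀ x ∈ t.vars, θ x = σ x) : t.subst θ = t.subst σ := by
  induction t using Tm.strongInd with
  | hv x => rw [Tm.subst_var, Tm.subst_var]; exact h x (Tm.mem_vars_var.mpr rfl)
  | ha f ts ih =>
    rw [Tm.subst_app_s11, Tm.subst_app_s11]
    congr 1
    apply List.map_congr_left
    intro t ht
    exact ih t ht (fun x hx => h x (Tm.mem_vars_app.mpr ⟨t, ht, hx⟩))

theorem Tm.subst_subst {F : Type} (θ σ : Subst F) (t : Tm F) :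
    (t.subst θ).subst σ = t.subst (Subst.comp θ σ) := by
  induction t using Tm.strongInd with
  | hv x => rw [Tm.subst_var, Tm.subst_var]; rfl
  | ha f ts ih =>
    rw [Tm.subst_app_s11, Tm.subst_app_s11, Tm.subst_app_s11, List.map_map]
    congr 1
    apply List.map_congr_left
    intro t ht
    exact ih t ht

theorem Tm.mem_vars_subst {F : Type} (θ : Subst F) (t : Tm F) (y : ℕ) :
    y ∈ (t.subst θ).vars ↔ ∃ x ∈ t.vars, y ∈ (θ x).vars := by
  induction t using Tm.strongInd with
  | hv x =>
    rw [Tm.subst_var]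
    constructor
    · intro h; exact ⟨x, Tm.mem_vars_var.mpr rfl, h⟩
    · rintro ⟨x', hx', h⟩; rwa [Tm.mem_vars_var.mp hx'] at h
  | ha f ts ih =>
    rw [Tm.subst_app_s11]
    simp only [Tm.mem_vars_app, List.mem_map]
    constructor
    · rintro ⟨t', ⟨t, ht, rfl⟩, hy⟩
      obtain ⟨x, hx, hyx⟩ := (ih t ht).mp hy
      exact ⟨x, ⟨t, ht, hx⟩, hyx⟩
    · rintro ⟨x, ⟨t, ht, hx⟩, hyx⟩
      exact ⟨t.subst θ, ⟨t, ht, rfl⟩, (ih t ht).mpr ⟨x, hx, hyx⟩⟩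

theorem Tm.ground_subst_iff {F : Type} (θ : Subst F) (t : Tm F) :
    (t.subst θ).Ground ↔ ∀ x ∈ t.vars, (θ x).Ground := by
  simp only [Tm.Ground, Set.eq_empty_iff_forall_notMem, Tm.mem_vars_subst]
  aesop
/-- safety of the abstract unification algorithm for groundness
analysis. -/
theorem stmt11 {F : Type} (U V : Set ℕ) (hU : U.Finite) (hV : V.Finite)
    (A B : Tm F) (hA : A.vars ⊆ U) (hB : B.vars ⊆ V)
    (θb σb : Set ℕ) (hθb : θb ⊆ U) (hσb : σb ⊆ V)
    (Ψ : Subst F) (hΨ : Subst.IsRenaming Ψ) (hΨdom : Subst.dom Ψ = U)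
    (hΨV : Subst.varImage Ψ U ∩ V = ∅)
    (μ₀ : Subst F) (hμ₀ : Subst.IsMGU μ₀ (A.subst Ψ) B)
    (hidem : Subst.comp μ₀ μ₀ = μ₀)
    (E₀ : Set (Tm F × Tm F))
    (hE₀ : E₀ = {e | ∃ x ∈ Subst.dom μ₀, e = (Tm.var x, μ₀ x)})
    (hsolved : ∀ x ∈ Subst.dom μ₀, ∀ y ∈ Subst.dom μ₀, y ∉ (μ₀ x).vars)
    (θ ω : Subst F) (hθ : Subst.IsSubst θ) (hω : Subst.IsSubst ω)
    (hθg : ∀ X ∈ θb, (θ X).Ground) (hωg : ∀ X ∈ σb, (ω X).Ground)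
    (ρ : Subst F) (hρ : Subst.IsRenaming ρ)
    (hsep : ((A.subst θ).subst ρ).vars ∩ (B.subst ω).vars = ∅)
    (μ : Subst F) (hμ : Subst.IsMGU μ ((A.subst θ).subst ρ) (B.subst ω)) :
    ∀ Z ∈ V ∩ Subst.upwards E₀ (Subst.downwards E₀ (Subst.varImage Ψ θb ∪ σb)),
      (Subst.comp ω μ Z).Ground := by

  classical
  -- variable-extraction function for the renaming Ψ
  obtain ⟨hΨfin, hΨvar, hΨinj⟩ := hΨ
  set g : ℕ → ℕ := fun x => (hΨvar x).choose with hg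
  have hgspec : ∀ x, Ψ x = Tm.var (g x) := fun x => (hΨvar x).choose_spec
  -- the combined unifier τ of AΨ and B
  set τ : Subst F := fun y =>
    if h : ∃ x, x ∈ U ∧ Ψ x = Tm.var y then ((θ h.choose).subst ρ).subst μ
    else if y ∈ V then (ω y).subst μ else Tm.var y with hτ
  have τspec1 : ∀ X ∈ U, τ (g X) = ((θ X).subst ρ).subst μ := by
    intro X hX
    have h : ∃ x, x ∈ U ∧ Ψ x = Tm.var (g X) := ⟨X, hX, hgspec X⟩
    have hc := h.choose_spec
    have hcx : h.choose = X := by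
      apply hΨinj (by rw [hΨdom]; exact hc.1) (by rw [hΨdom]; exact hX)
      rw [hc.2, hgspec X]
    rw [hτ]
    simp only
    rw [dif_pos h, hcx]
  have τspec2 : ∀ y ∈ V, τ y = (ω y).subst μ := by
    intro y hy
    have h : ¬ ∃ x, x ∈ U ∧ Ψ x = Tm.var y := by
      rintro ⟨x, hxU, hx⟩
      have : y ∈ Subst.varImage Ψ U ∩ V := ⟨⟨x, hxU, hx⟩, hy⟩
      rw [hΨV] at this
      exact this
    rw [hτ]
    simp only
    rw [dif_neg h, if_pos hy]
  -- τ has finite support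
  have τfin : Subst.IsSubst τ := by
    apply Set.Finite.subset ((hU.image g).union hV)
    intro y hy
    by_contra hc
    simp only [Set.mem_union, not_or] at hc
    apply hy
    rw [hτ]
    simp only
    rw [dif_neg, if_neg hc.2]
    rintro ⟨x, hxU, hx⟩
    apply hc.1
    refine ⟨x, hxU, ?_⟩
    have h3 := (hgspec x).symm.trans hx
    exact (Tm.var.injEq _ _).mp h3
  -- τ is a unifier of AΨ and B
  have hAτ : (A.subst Ψ).subst τ = ((A.subst θ).subst ρ).subst μ := by
    rw [Tm.subst_subst, Tm.subst_subst, Tm.subst_subst]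
    apply Tm.subst_congr_s11
    intro x hx
    have hxU : x ∈ U := hA hx
    show (Ψ x).subst τ = ((θ x).subst (Subst.comp ρ μ))
    rw [hgspec x, Tm.subst_var, τspec1 x hxU, Tm.subst_subst]
  have hBτ : B.subst τ = (B.subst ω).subst μ := by
    rw [Tm.subst_subst]
    apply Tm.subst_congr_s11
    intro x hx
    exact τspec2 x (hB hx)
  have hτunif : Subst.Unifier τ (A.subst Ψ) B := by
    refine ⟨τfin, ?_⟩
    rw [hAτ, hBτ, hμ.1.2]
  -- factor τ through the mgu μ₀
  obtain ⟨δ, hδfin, hτδ⟩ := hμ₀.2 τ hτunif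
  have hτδ' : ∀ y, τ y = (μ₀ y).subst δ := fun y => congrFun hτδ y
  -- groundness on S₀
  set S₀ : Set ℕ := Subst.varImage Ψ θb ∪ σb with hS₀
  have groundS₀ : ∀ y ∈ S₀, (τ y).Ground := by
    rintro y (⟨X, hXθb, hX⟩ | hyσb)
    · have hXU : X ∈ U := hθb hXθb
      have hgy : g X = y := by
        have := hgspec X
        rw [hX] at this
        exact ((Tm.var.injEq _ _).mp this).symm
      rw [← hgy, τspec1 X hXU]
      rw [Tm.ground_subst_iff]
      intro z hz
      rw [Tm.mem_vars_subst] at hz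
      obtain ⟨w, hw, -⟩ := hz
      rw [hθg X hXθb] at hw
      exact absurd hw (Set.notMem_empty w)
    · rw [τspec2 y (hσb hyσb), Tm.ground_subst_iff]
      intro z hz
      rw [hωg y hyσb] at hz
      exact absurd hz (Set.notMem_empty z)
  -- the key claim ★
  set S₁ : Set ℕ := Subst.downwards E₀ S₀ with hS₁
  have star : ∀ y ∈ S₁, y ∉ Subst.dom μ₀ → (δ y).Ground := by
    rintro y (hyS₀ | ⟨x, t, htE, hxS₀, hyt⟩) hynd
    · have h1 : μ₀ y = Tm.var y := by
        by_contra hc; exact hynd hc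
      have := groundS₀ y hyS₀
      rwa [hτδ' y, h1, Tm.subst_var] at this
    · -- downward case
      rw [hE₀] at htE
      obtain ⟨x', hx'd, hxt⟩ := htE
      have hxx : x = x' ∧ t = μ₀ x' := by
        have h1 := congrArg Prod.fst hxt
        have h2 := congrArg Prod.snd hxt
        simp only at h1 h2
        exact ⟨(Tm.var.injEq _ _).mp h1, h2⟩
      obtain ⟨rfl, rfl⟩ := hxx
      have := groundS₀ x hxS₀
      rw [hτδ' x, Tm.ground_subst_iff] at this
      exact this y hyt
  -- main goal
  rintro Z ⟨hZV, hZup⟩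
  show ((ω Z).subst μ).Ground
  rw [← τspec2 Z hZV, hτδ' Z]
  rcases hZup with hZS₁ | ⟨t, htE, hts⟩
  · -- Z ∈ S₁
    by_cases hZd : Z ∈ Subst.dom μ₀
    · rcases hZS₁ with hZS₀ | ⟨x, t, htE, hxS₀, hZt⟩
      · have := groundS₀ Z hZS₀
        rwa [hτδ' Z] at this
      · rw [hE₀] at htE
        obtain ⟨x', hx'd, hxt⟩ := htE
        have h2 := congrArg Prod.snd hxt
        simp only at h2
        subst h2
        exact absurd hZt (hsolved x' hx'd Z hZd)
    · have h1 : μ₀ Z = Tm.var Z := by by_contra hc; exact hZd hc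
      rw [h1, Tm.subst_var]
      exact star Z hZS₁ hZd
  · -- upwards case
    rw [hE₀] at htE
    obtain ⟨x', hx'd, hxt⟩ := htE
    have h1 := congrArg Prod.fst hxt
    have h2 := congrArg Prod.snd hxt
    simp only at h1 h2
    have hZx : Z = x' := (Tm.var.injEq _ _).mp h1
    subst hZx
    subst h2
    rw [Tm.ground_subst_iff]
    intro y hy
    have hynd : y ∉ Subst.dom μ₀ := fun hyd => hsolved Z hx'd y hyd hy
    exact star y (hts hy) hynd
end
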